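/- Let G be a finite connected simple graph on a vertex set V with at least two vertices and a distinguished sink vertex s ∈ V, and let z : V → ℕ be a sandpile configuration. If L₁ and L₂ are two complete legal toppling sequences (with sink s) from z, then L₁ and L₂ are equal as multisets of vertices: every vertex is toppled the same number of times in any complete legal toppling sequence from z. -/

import Mathlib

variable {V : Type*}

/-- The toppling operator: the unstable vertex `i` sends one particle to each of
its neighbours, losing `deg i` particles itself. -/
def topple (G : SimpleGraph V) [G.LocallyFinite] [DecidableEq V] [DecidableRel G.Adj]
    (z : V → ℕ) (i : V) : V → ℕ :=
  fun j => if j = i then z i - G.degree i else if G.Adj i j then z j + 1 else z j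

/-- A legal toppling sequence (with sink `s`) from `z`: every toppled vertex is
different from `s` and is unstable in the configuration reached so far. -/
def LegalSeq (G : SimpleGraph V) [G.LocallyFinite] [DecidableEq V] [DecidableRel G.Adj]
    (s : V) : (V → ℕ) → List V → Prop
  | _, [] => True
  | z, i :: L => i ≠ s ∧ G.degree i ≤ z i ∧ LegalSeq G s (topple G z i) L

section Aux
variable [Fintype V] [DecidableEq V] (G : SimpleGraph V) [DecidableRel G.Adj]

lemma topple_mono (z : V → ℕ) (i j : V) (h : j ≠ i) : z j ≤ topple G z i j := by
  simp only [topple, if_neg h]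
  split <;> omega

lemma topple_comm (z : V → ℕ) (i j : V) (hij : i ≠ j)
    (hi : G.degree i ≤ z i) (hj : G.degree j ≤ z j) :
    topple G (topple G z i) j = topple G (topple G z j) i := by
  funext k
  rcases eq_or_ne k i with rfl | hki
  · by_cases h : G.Adj j k <;> simp [topple, hij, hij.symm, h] <;> omega
  · rcases eq_or_ne k j with rfl | hkj
    · by_cases h : G.Adj i k <;> simp [topple, hij, hij.symm, hki, h] <;> omega
    · by_cases h1 : G.Adj i k <;> by_cases h2 : G.Adj j k <;>
        simp [topple, hij, hij.symm, hki, hkj, h1, h2]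
end Aux

section Aux2
variable [Fintype V] [DecidableEq V] (G : SimpleGraph V) [DecidableRel G.Adj]

lemma move_front (s : V) : ∀ (A : List V) (z : V → ℕ) (j : V) (B : List V),
    j ∉ A → j ≠ s → G.degree j ≤ z j →
    LegalSeq G s z (A ++ j :: B) →
    LegalSeq G s (topple G z j) (A ++ B) ∧
      (A ++ j :: B).foldl (topple G) z = (A ++ B).foldl (topple G) (topple G z j)
  | [], z, j, B, _, hjs, hj, hL => ⟨hL.2.2, rfl⟩
  | i :: A, z, j, B, hjA, hjs, hj, hL => by
    obtain ⟨his, hi, hrest⟩ := hL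
    have hji : j ≠ i := fun h => hjA (h ▸ (List.mem_cons_self : i ∈ i :: A))
    have hjA' : j ∉ A := fun h => hjA (List.mem_cons_of_mem i h)
    have hj' : G.degree j ≤ topple G z i j := le_trans hj (topple_mono G z i j hji)
    obtain ⟨ihL, ihF⟩ := move_front s A (topple G z i) j B hjA' hjs hj' hrest
    have hc := topple_comm G z i j hji.symm hi hj
    refine ⟨⟨his, le_trans hi (topple_mono G z j i hji.symm), ?_⟩, ?_⟩
    · rw [← hc]; exact ihL
    · simp only [List.cons_append, List.foldl_cons]
      rw [ihF, ← hc]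

lemma mem_of_unstable (s : V) : ∀ (L : List V) (z : V → ℕ) (j : V),
    G.degree j ≤ z j → LegalSeq G s z L → L.foldl (topple G) z j < G.degree j → j ∈ L
  | [], z, j, hj, _, hlt => absurd hlt (not_lt.mpr hj)
  | i :: L, z, j, hj, hL, hlt => by
    rcases eq_or_ne j i with rfl | hji
    · exact (List.mem_cons_self : j ∈ j :: L)
    · have hj' : G.degree j ≤ topple G z i j := le_trans hj (topple_mono G z i j hji)
      exact List.mem_cons_of_mem i
        (mem_of_unstable s L (topple G z i) j hj' hL.2.2 hlt)

lemma exists_split {j : V} : ∀ {L : List V}, j ∈ L →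
    ∃ A B, L = A ++ j :: B ∧ j ∉ A
  | i :: L, h => by
    rcases eq_or_ne j i with rfl | hji
    · exact ⟨[], L, rfl, (List.not_mem_nil : j ∉ ([] : List V))⟩
    · obtain ⟨A, B, rfl, hA⟩ := exists_split (((List.mem_cons).mp h).resolve_left hji)
      exact ⟨i :: A, B, rfl, by simp [hji, hA]⟩

lemma multiset_le (s : V) : ∀ (L₂ : List V) (z : V → ℕ) (L₁ : List V),
    LegalSeq G s z L₁ → LegalSeq G s z L₂ →
    (∀ v, v ≠ s → L₁.foldl (topple G) z v < G.degree v) →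
    (L₂ : Multiset V) ≤ (L₁ : Multiset V)
  | [], _, _, _, _, _ => by simp
  | j :: L₂, z, L₁, h₁, h₂, hc => by
    obtain ⟨hjs, hj, hL₂⟩ := h₂
    have hjmem : j ∈ L₁ := mem_of_unstable G s L₁ z j hj h₁ (hc j hjs)
    obtain ⟨A, B, rfl, hjA⟩ := exists_split hjmem
    obtain ⟨hleg, hfold⟩ := move_front G s A z j B hjA hjs hj h₁
    have hc' : ∀ v, v ≠ s → (A ++ B).foldl (topple G) (topple G z j) v < G.degree v :=
      fun v hv => hfold ▸ hc v hv
    have ih := multiset_le s L₂ (topple G z j) (A ++ B) hleg hL₂ hc'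
    have : ((A ++ j :: B : List V) : Multiset V) = j ::ₘ ((A ++ B : List V) : Multiset V) :=
      Multiset.coe_eq_coe.mpr List.perm_middle
    rw [this]
    exact Multiset.cons_le_cons j ih

end Aux2

/-- Abelian property (strong form): on a finite connected simple graph with at
least two vertices and a sink `s`, any two complete legal toppling sequences
from the same initial configuration are equal as multisets of vertices: every
vertex is toppled the same number of times. -/

theorem abelian_multiset [Fintype V] [DecidableEq V]
    (G : SimpleGraph V) [DecidableRel G.Adj]
    (hconn : G.Connected) (hcard : 1 < Fintype.card V) (s : V)
    (z : V → ℕ) (L₁ L₂ : List V)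
    (h₁ : LegalSeq G s z L₁) (h₂ : LegalSeq G s z L₂)
    (hc₁ : ∀ v, v ≠ s → L₁.foldl (topple G) z v < G.degree v)
    (hc₂ : ∀ v, v ≠ s → L₂.foldl (topple G) z v < G.degree v) :
    (L₁ : Multiset V) = (L₂ : Multiset V) :=
  le_antisymm (multiset_le G s L₁ z L₂ h₂ h₁ hc₂) (multiset_le G s L₂ z L₁ h₁ h₂ hc₁)
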